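/- Let K be a field, a, b, c ∈ K parameters, and (x, y, z) ∈ K³ with by + 1 ≠ 0 and ay² + 1 ≠ 0. Define x₂ = (ay²z − ay + z + b)/(by + 1) and z₂ = (bxy + x + ay − b)/(ay² + 1). Then (ay²·z₂ − ay + z₂ + b)/(by + 1) = x and (b·x₂·y + x₂ + ay − b)/(ay² + 1) = z; that is, applying the map R₂ twice returns the original point. -/

import Mathlib

/-- The map `R₂` of the polynomial-invariants example is an involution. -/
theorem stmt_6 {K : Type*} [Field K] (a b c x y z : K)
    (h1 : b * y + 1 ≠ 0) (h2 : a * y ^ 2 + 1 ≠ 0) :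
    let x2 := (a * y ^ 2 * z - a * y + z + b) / (b * y + 1)
    let z2 := (b * x * y + x + a * y - b) / (a * y ^ 2 + 1)
    (a * y ^ 2 * z2 - a * y + z2 + b) / (b * y + 1) = x ∧
    (b * x2 * y + x2 + a * y - b) / (a * y ^ 2 + 1) = z := by
  have h1' : y * b + 1 ≠ 0 := by rwa [mul_comm] at h1
  constructor <;> field_simp <;> ring
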